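/- Reiner's poset of rooted spanning forests SF_n is uniform: for every F ∈ SF_n of rank i (that is, with i edges and hence n − i rooted trees), the principal upper filter U(F) = {G ∈ SF_n : G ≥ F} is isomorphic as a poset to SF_{n−i}. -/

import Mathlib

open Finset

open scoped BigOperators Classical

/-! ## Generic machinery for edge labelings of posets presented by cover relations -/

section Chains

variable {α : Type*} {L : Type*}

/-- The word of labels read along a list of poset elements. -/
def wordOf (lab : α → α → L) : List α → List L
  | x :: y :: rest => lab x y :: wordOf lab (y :: rest)
  | _ => []

/-- `c` is a saturated chain from `x` to `y` with respect to the cover relation `cov`;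
in a graded poset these are exactly the maximal chains of the interval `[x, y]`. -/
def IsSatChain (cov : α → α → Prop) (x y : α) (c : List α) : Prop :=
  c.Chain' cov ∧ c.head? = some x ∧ c.getLast? = some y

/-- A word of labels is increasing if consecutive labels strictly increase. -/
def IncWord (lt : L → L → Prop) (w : List L) : Prop := w.Chain' lt

/-- A word of labels is ascent-free if no consecutive pair of labels strictly increases. -/
def AscFree (lt : L → L → Prop) (w : List L) : Prop := w.Chain' fun a b => ¬ lt a b

/-- The partial order generated by a cover relation. -/
def leOf (cov : α → α → Prop) : α → α → Prop := Relation.ReflTransGen cov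

/-- The strict order generated by a cover relation. -/
def ltOf (cov : α → α → Prop) (a b : α) : Prop := leOf cov a b ∧ a ≠ b

/-- An ER-labeling: every closed interval has a unique increasing maximal chain. -/
def IsERLabeling (cov : α → α → Prop) (lab : α → α → L) (lt : L → L → Prop) : Prop :=
  ∀ x y, leOf cov x y → ∃! c, IsSatChain cov x y c ∧ IncWord lt (wordOf lab c)

/-- The rank two switching property: in every rank-two interval whose increasing chain
has word of labels `ab`, there is a unique chain with word of labels `ba`. -/
def RankTwoSwitch (cov : α → α → Prop) (lab : α → α → L) (lt : L → L → Prop) : Prop :=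
  ∀ x y c a b, IsSatChain cov x y c → IncWord lt (wordOf lab c) → wordOf lab c = [a, b] →
    ∃! c', IsSatChain cov x y c' ∧ wordOf lab c' = [b, a]

/-- In every interval, distinct ascent-free maximal chains have distinct label words. -/
def AscFreeInj (cov : α → α → Prop) (lab : α → α → L) (lt : L → L → Prop) : Prop :=
  ∀ x y c c', IsSatChain cov x y c → IsSatChain cov x y c' →
    AscFree lt (wordOf lab c) → AscFree lt (wordOf lab c') →
    wordOf lab c = wordOf lab c' → c = c'

/-- An EW-labeling. -/
def IsEWLabeling (cov : α → α → Prop) (lab : α → α → L) (lt : L → L → Prop) : Prop :=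
  IsERLabeling cov lab lt ∧ RankTwoSwitch cov lab lt ∧ AscFreeInj cov lab lt

/-- An EL-labeling: every closed interval has a unique increasing maximal chain,
which lexicographically precedes every other maximal chain of the interval. -/
def IsELLabeling (cov : α → α → Prop) (lab : α → α → L) (lt : L → L → Prop) : Prop :=
  ∀ x y, leOf cov x y →
    ∃ c, (IsSatChain cov x y c ∧ IncWord lt (wordOf lab c)) ∧
      ∀ c', IsSatChain cov x y c' → c' ≠ c →
        ¬ IncWord lt (wordOf lab c') ∧ List.Lex lt (wordOf lab c) (wordOf lab c')

end Chains

/-! ## Möbius functions and Whitney numbers -/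

section Whitney

variable {α : Type*} {β : Type*}

/-- Auxiliary Möbius function computed with fuel; for an element of rank `k` of a
graded poset, fuel `k` computes the one-variable Möbius function `μ(0̂, ·)`. -/
noncomputable def muAux (ltr : α → α → Prop) (bot : α) : ℕ → α → ℤ
  | 0, x => if x = bot then 1 else 0
  | k + 1, x => if x = bot then 1 else - ∑ᶠ (y : α) (_ : ltr y x), muAux ltr bot k y

/-- The one-variable Möbius function `μ(0̂, x)` of a graded poset presented by its
cover relation `cov`, minimum `bot` and rank function `rk`. -/
noncomputable def muBot (cov : α → α → Prop) (bot : α) (rk : α → ℕ) (x : α) : ℤ :=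
  muAux (ltOf cov) bot (rk x) x

/-- The `k`-th Whitney number of the first kind. -/
noncomputable def whitney1 (cov : α → α → Prop) (bot : α) (rk : α → ℕ) (k : ℕ) : ℤ :=
  ∑ᶠ (x : α) (_ : rk x = k), muBot cov bot rk x

/-- The `k`-th Whitney number of the second kind. -/
noncomputable def whitney2 (rk : α → ℕ) (k : ℕ) : ℕ :=
  Nat.card {x : α // rk x = k}

/-- Two graded posets are Whitney duals if their Whitney numbers of the first and second
kind are swapped (up to sign). -/
def IsWhitneyDual (covP : α → α → Prop) (botP : α) (rkP : α → ℕ)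
    (covQ : β → β → Prop) (botQ : β) (rkQ : β → ℕ) : Prop :=
  ∀ k, (whitney1 covP botP rkP k).natAbs = whitney2 rkQ k ∧
       (whitney1 covQ botQ rkQ k).natAbs = whitney2 rkP k

/-- Two graded posets are Whitney twins if they have the same Whitney numbers of the first
and of the second kind. -/
def IsWhitneyTwin (covP : α → α → Prop) (botP : α) (rkP : α → ℕ)
    (covQ : β → β → Prop) (botQ : β) (rkQ : β → ℕ) : Prop :=
  ∀ k, whitney1 covP botP rkP k = whitney1 covQ botQ rkQ k ∧ whitney2 rkP k = whitney2 rkQ k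

/-- `(cov, bot, rk)` presents a graded poset with minimum `bot`. -/
def IsGradedPoset (cov : α → α → Prop) (bot : α) (rk : α → ℕ) : Prop :=
  (∀ x, leOf cov bot x) ∧ rk bot = 0 ∧ ∀ x y, cov x y → rk y = rk x + 1

/-- A graded poset has a Whitney dual. -/
def HasWhitneyDual {γ : Type} (cov : γ → γ → Prop) (bot : γ) (rk : γ → ℕ) : Prop :=
  ∃ (β : Type) (_ : Finite β) (covQ : β → β → Prop) (botQ : β) (rkQ : β → ℕ),
    IsGradedPoset covQ botQ rkQ ∧ IsWhitneyDual cov bot rk covQ botQ rkQ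

/-- Isomorphism of the posets generated by two cover relations. -/
def CovPosetIso (covP : α → α → Prop) (covQ : β → β → Prop) : Prop :=
  ∃ e : α ≃ β, ∀ x y, leOf covP x y ↔ leOf covQ (e x) (e y)

end Whitney

/-! ## The label posets `Λₙʷ` and `Λₙ•` (strict order relations)

Labels are triples `(a, b, u)` with `a < b` in `[n]` and `u ∈ {0,1}` (encoded as `Bool`). -/

/-- The strict order of `Λₙʷ = Γ₁ ⊕ ⋯ ⊕ Γ_{n-1}` where `Γ_a` carries the product order
`(a,b)ᵘ ≤ (a,c)ᵛ ↔ b ≤ c ∧ u ≤ v`. -/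
def ltLw (x y : ℕ × ℕ × Bool) : Prop :=
  x.1 < y.1 ∨ (x.1 = y.1 ∧ x.2.1 ≤ y.2.1 ∧ x.2.2 ≤ y.2.2 ∧ x.2 ≠ y.2)

/-- The strict order of `Λₙ• = A₁ ⊕ C₁ ⊕ ⋯ ⊕ A_{n-1} ⊕ C_{n-1}` where `A_a` is the
antichain of the `(a,b)⁰` and `C_a` is the chain of the `(a,b)¹` ordered by `b`. -/
def ltLp (x y : ℕ × ℕ × Bool) : Prop :=
  x.1 < y.1 ∨ (x.1 = y.1 ∧
    ((x.2.2 = false ∧ y.2.2 = true) ∨ (x.2.2 = true ∧ y.2.2 = true ∧ x.2.1 < y.2.1)))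

/-! ## Pointed and weighted partition posets -/

/-- The minimum of a finite set of naturals (`0` for the empty set). -/
def minB (B : Finset ℕ) : ℕ := B.min.untopD 0

/-- Pointed partitions of the ground set `A`: partitions of `A` into blocks, each block
carrying a distinguished (pointed) element.  A pointed block is a pair `(B, p)` with `p ∈ B`. -/
abbrev PPart (A : Finset ℕ) : Type :=
  {π : Finset (Finset ℕ × ℕ) //
    (∀ b ∈ π, b.2 ∈ b.1) ∧
    (∀ b ∈ π, ∀ b' ∈ π, b ≠ b' → Disjoint b.1 b'.1) ∧
    π.biUnion Prod.fst = A}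

/-- The cover relation of the pointed partition poset: merge two pointed blocks, the merged
block being pointed at the pointed element of one of the two. -/
def covPP {A : Finset ℕ} (π π' : PPart A) : Prop :=
  ∃ b1 ∈ π.1, ∃ b2 ∈ π.1, minB b1.1 < minB b2.1 ∧
    ∃ p : ℕ, (p = b1.2 ∨ p = b2.2) ∧
      π'.1 = insert (b1.1 ∪ b2.1, p) ((π.1.erase b1).erase b2)

/-- The labeling `λ•` (as a bare label map): the cover `u`-merging blocks `A, B` with
`min A < min B` gets the label `(min A, min B, u)`, where `u = 1` exactly when the merged
block is pointed at the pointed element of `A`. -/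
noncomputable def labPP {A : Finset ℕ} (π π' : PPart A) : ℕ × ℕ × Bool :=
  let olds := π.1 \ π'.1
  let mins := olds.image (fun b => minB b.1)
  (mins.min.untopD 0, mins.max.unbotD 0,
    if ∃ b ∈ olds, minB b.1 = mins.min.untopD 0 ∧ ∃ d ∈ π'.1 \ π.1, d.2 = b.2
      then true else false)

/-- The minimum of the pointed partition poset: all blocks are pointed singletons. -/
def botPP (A : Finset ℕ) : PPart A :=
  ⟨A.image fun i => ({i}, i), by
    refine ⟨?_, ?_, ?_⟩
    · intro b hb
      obtain ⟨i, -, rfl⟩ := Finset.mem_image.1 hb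
      exact Finset.mem_singleton_self i
    · intro b hb b' hb' hne
      obtain ⟨i, -, rfl⟩ := Finset.mem_image.1 hb
      obtain ⟨j, -, rfl⟩ := Finset.mem_image.1 hb'
      have hij : i ≠ j := fun h => hne (by rw [h])
      simp [Finset.disjoint_left, hij]
    · ext x
      simp⟩

/-- The rank function of the pointed partition poset. -/
def rkPP {A : Finset ℕ} (π : PPart A) : ℕ := A.card - π.1.card

/-- Weighted partitions of the ground set `A`: partitions of `A` into blocks, each block `B`
carrying a weight `v` with `0 ≤ v ≤ |B| - 1`. -/
abbrev WPart (A : Finset ℕ) : Type :=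
  {π : Finset (Finset ℕ × ℕ) //
    (∀ b ∈ π, b.2 < b.1.card) ∧
    (∀ b ∈ π, ∀ b' ∈ π, b ≠ b' → Disjoint b.1 b'.1) ∧
    π.biUnion Prod.fst = A}

/-- The cover relation of the weighted partition poset: merge blocks `A^v, B^w` into
`(A ∪ B)^(v+w+u)` for some `u ∈ {0,1}`. -/
def covWP {A : Finset ℕ} (π π' : WPart A) : Prop :=
  ∃ b1 ∈ π.1, ∃ b2 ∈ π.1, minB b1.1 < minB b2.1 ∧ ∃ u : Bool,
    π'.1 = insert (b1.1 ∪ b2.1, b1.2 + b2.2 + (if u then 1 else 0)) ((π.1.erase b1).erase b2)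

/-- The labeling `λ_w` (as a bare label map): the cover merging `A^v, B^w` with
`min A < min B` into `(A ∪ B)^(v+w+u)` gets the label `(min A, min B, u)`. -/
noncomputable def labWP {A : Finset ℕ} (π π' : WPart A) : ℕ × ℕ × Bool :=
  let olds := π.1 \ π'.1
  let mins := olds.image (fun b => minB b.1)
  (mins.min.untopD 0, mins.max.unbotD 0,
    if (π'.1 \ π.1).sum Prod.snd = olds.sum Prod.snd + 1 then true else false)

/-- The minimum of the weighted partition poset: all blocks singletons of weight `0`. -/
def botWP (A : Finset ℕ) : WPart A :=
  ⟨A.image fun i => ({i}, 0), by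
    refine ⟨?_, ?_, ?_⟩
    · intro b hb
      obtain ⟨i, -, rfl⟩ := Finset.mem_image.1 hb
      simp
    · intro b hb b' hb' hne
      obtain ⟨i, -, rfl⟩ := Finset.mem_image.1 hb
      obtain ⟨j, -, rfl⟩ := Finset.mem_image.1 hb'
      have hij : i ≠ j := fun h => hne (by rw [h])
      simp [Finset.disjoint_left, hij]
    · ext x
      simp⟩

/-- The rank function of the weighted partition poset. -/
def rkWP {A : Finset ℕ} (π : WPart A) : ℕ := A.card - π.1.card
/-! ## Bicolored binary trees and Lyndon forests -/

/-- Planar binary trees with `ℕ`-labeled leaves and `Bool`-colored internal vertices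
(`false` = color 0, `true` = color 1). -/
inductive BT : Type
  | leaf : ℕ → BT
  | node : Bool → BT → BT → BT
deriving DecidableEq

namespace BT

/-- The valency: the minimum leaf label of a tree. -/
def nu : BT → ℕ
  | leaf a => a
  | node _ l r => min l.nu r.nu

/-- The set of leaf labels of a tree. -/
def leaves : BT → Finset ℕ
  | leaf a => {a}
  | node _ l r => l.leaves ∪ r.leaves

/-- The number of internal vertices of a tree. -/
def internals : BT → ℕ
  | leaf _ => 0
  | node _ l r => l.internals + r.internals + 1

/-- A tree is normalized if its leaf labels are distinct and every internal vertex has the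
same valency as its left child. -/
def normalized : BT → Prop
  | leaf _ => True
  | node _ l r => l.normalized ∧ r.normalized ∧ Disjoint l.leaves r.leaves ∧ l.nu < r.nu

/-- The pointed Lyndon condition: at every internal vertex `v` with internal left child,
`color (L v) ≥ color v`, and if `color (L v) = color v = 1` then `v` is a Lyndon vertex,
i.e. `ν (R (L v)) > ν (R v)`. -/
def pLyn : BT → Prop
  | leaf _ => True
  | node c l r => l.pLyn ∧ r.pLyn ∧
      (match l with
       | leaf _ => True
       | node c' _ r' => c ≤ c' ∧ ((c' = c ∧ c = true) → r.nu < r'.nu))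

/-- The bicolored Lyndon condition: every internal vertex with internal left child is
Lyndon (`ν (R (L v)) > ν (R v)`) or satisfies `color (L v) > color v`. -/
def wLyn : BT → Prop
  | leaf _ => True
  | node c l r => l.wLyn ∧ r.wLyn ∧
      (match l with
       | leaf _ => True
       | node c' _ r' => r.nu < r'.nu ∨ c < c')

/-- The pointed element of a bicolored tree: a `1`-colored vertex keeps the point of its
left subtree and a `0`-colored vertex keeps the point of its right subtree. -/
def ppt : BT → ℕ
  | leaf a => a
  | node c l r => if c then l.ppt else r.ppt

end BT

/-- `u`-merging of two pointed Lyndon trees: create a new root of color `u` with the two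
trees as subtrees, then repeatedly slide the new vertex together with its right subtree
past its left child until the pointed Lyndon condition holds at the new vertex. -/
def mergeP (u : Bool) : BT → BT → BT
  | BT.leaf a, t2 => BT.node u (BT.leaf a) t2
  | BT.node c a b, t2 =>
      if u ≤ c ∧ ((c = true ∧ u = true) → t2.nu < b.nu)
      then BT.node u (BT.node c a b) t2
      else BT.node c (mergeP u a t2) b

/-- `u`-merging of two bicolored Lyndon trees: create a new root of color `u` with the two
trees as subtrees, then repeatedly slide the new vertex together with its right subtree
past its left child until the bicolored Lyndon condition holds at the new vertex. -/
def mergeW (u : Bool) : BT → BT → BT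
  | BT.leaf a, t2 => BT.node u (BT.leaf a) t2
  | BT.node c a b, t2 =>
      if t2.nu < b.nu ∨ u < c
      then BT.node u (BT.node c a b) t2
      else BT.node c (mergeW u a t2) b

/-- A valid forest on the ground set `[n]`, each tree normalized and satisfying `P`, the
trees having pairwise disjoint leaf sets which together cover `[n] = {1, …, n}`. -/
def ForestValid (n : ℕ) (P : BT → Prop) (F : Finset BT) : Prop :=
  (∀ t ∈ F, t.normalized ∧ P t) ∧
  (∀ t ∈ F, ∀ t' ∈ F, t ≠ t' → Disjoint t.leaves t'.leaves) ∧
  F.biUnion BT.leaves = Finset.Icc 1 n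

/-- The set of pointed Lyndon forests on `[n]`. -/
abbrev FLynP (n : ℕ) : Type := {F : Finset BT // ForestValid n BT.pLyn F}

/-- The set of bicolored Lyndon forests on `[n]`. -/
abbrev FLynW (n : ℕ) : Type := {F : Finset BT // ForestValid n BT.wLyn F}

/-- The cover relation on forests: `u`-merge two of the trees (the one with smaller minimum
leaf label going to the left). -/
def covForest (merge : Bool → BT → BT → BT) (F F' : Finset BT) : Prop :=
  ∃ t1 ∈ F, ∃ t2 ∈ F, t1.nu < t2.nu ∧ ∃ u : Bool,
    F' = insert (merge u t1 t2) ((F.erase t1).erase t2)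

/-- The cover relation of the poset of pointed Lyndon forests `FLyn_n^•`. -/
def covFP {n : ℕ} (F F' : FLynP n) : Prop := covForest mergeP F.1 F'.1

/-- The cover relation of the poset of bicolored Lyndon forests `FLyn_n^w`. -/
def covFW {n : ℕ} (F F' : FLynW n) : Prop := covForest mergeW F.1 F'.1

/-- The forest of `n` isolated leaves. -/
def botForest (n : ℕ) : Finset BT := (Finset.Icc 1 n).image BT.leaf

theorem botForest_valid (n : ℕ) (P : BT → Prop) (hP : ∀ a, P (BT.leaf a)) :
    ForestValid n P (botForest n) := by
  refine ⟨?_, ?_, ?_⟩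
  · intro t ht
    obtain ⟨i, -, rfl⟩ := Finset.mem_image.1 ht
    exact ⟨trivial, hP i⟩
  · intro t ht t' ht' hne
    obtain ⟨i, -, rfl⟩ := Finset.mem_image.1 ht
    obtain ⟨j, -, rfl⟩ := Finset.mem_image.1 ht'
    have hij : i ≠ j := fun h => hne (by rw [h])
    simp only [BT.leaves]
    simp [Finset.disjoint_left, hij]
  · ext x
    simp [botForest, BT.leaves]

/-- The minimum of the poset of pointed Lyndon forests. -/
def botFP (n : ℕ) : FLynP n := ⟨botForest n, botForest_valid n _ fun _ => trivial⟩

/-- The minimum of the poset of bicolored Lyndon forests. -/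
def botFW (n : ℕ) : FLynW n := ⟨botForest n, botForest_valid n _ fun _ => trivial⟩

/-- The rank of a forest: its total number of internal vertices. -/
def rkForest (F : Finset BT) : ℕ := F.sum BT.internals

/-- The rank function of `FLyn_n^•`. -/
def rkFP {n : ℕ} (F : FLynP n) : ℕ := rkForest F.1

/-- The rank function of `FLyn_n^w`. -/
def rkFW {n : ℕ} (F : FLynW n) : ℕ := rkForest F.1

/-! ## The Whitney dual construction `R_λ(P)` -/

section RPoset

variable {α : Type*} {L : Type*}

/-- Swap the leftmost ascent of a word of labels. -/
noncomputable def swapFirstAscent (lt : L → L → Prop) : List L → List L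
  | a :: b :: rest => if lt a b then b :: a :: rest else a :: swapFirstAscent lt (b :: rest)
  | w => w

/-- Sort a word of labels by repeatedly swapping its leftmost ascent until it is
ascent-free. -/
noncomputable def sortWord (lt : L → L → Prop) (w : List L) : List L :=
  (swapFirstAscent lt)^[w.length * w.length] w

/-- The underlying set of the Whitney dual `R_λ(P)`: pairs `(x, w)` where `w` is the label
word of an ascent-free saturated chain from `0̂` to `x`. -/
abbrev RPoset (cov : α → α → Prop) (lab : α → α → L) (lt : L → L → Prop) (bot : α) : Type _ :=
  {q : α × List L //
    ∃ c, IsSatChain cov bot q.1 c ∧ AscFree lt (wordOf lab c) ∧ wordOf lab c = q.2}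

/-- The cover relation of `R_λ(P)`: `(x, w) ⋖ (y, u)` iff `x ⋖ y` and `u` is obtained by
sorting the label of `x ⋖ y` into `w`. -/
def covR (cov : α → α → Prop) (lab : α → α → L) (lt : L → L → Prop) (bot : α)
    (p q : RPoset cov lab lt bot) : Prop :=
  cov p.1.1 q.1.1 ∧ q.1.2 = sortWord lt (p.1.2 ++ [lab p.1.1 q.1.1])

end RPoset

/-! ## Reiner's poset of rooted spanning forests -/

/-- A rooted spanning forest on `[n]`, encoded by its parent function: `f i` is the parent
of the vertex `i` (`f i = i` for roots), vertices outside `[n]` being fixed, and every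
vertex reaching a root after finitely many steps (acyclicity). -/
def SFvalid (n : ℕ) (f : ℕ → ℕ) : Prop :=
  (∀ i ∈ Finset.Icc 1 n, f i ∈ Finset.Icc 1 n) ∧
  (∀ i, i ∉ Finset.Icc 1 n → f i = i) ∧
  (∀ i, ∃ k, f^[k + 1] i = f^[k] i)

/-- Reiner's poset `SF_n` of rooted spanning forests of the complete graph on `[n]`. -/
abbrev SF (n : ℕ) : Type := {f : ℕ → ℕ // SFvalid n f}

/-- The cover relation of `SF_n`: add an edge between the roots of two trees, one of the
two roots becoming the root of the merged tree. -/
def covSF {n : ℕ} (f g : SF n) : Prop :=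
  ∃ r1 ∈ Finset.Icc 1 n, ∃ r2 ∈ Finset.Icc 1 n, r1 ≠ r2 ∧
    f.1 r1 = r1 ∧ f.1 r2 = r2 ∧
    (g.1 = Function.update f.1 r1 r2 ∨ g.1 = Function.update f.1 r2 r1)

/-- The rank of a rooted spanning forest: its number of edges. -/
def rkSF {n : ℕ} (f : SF n) : ℕ := ((Finset.Icc 1 n).filter fun i => f.1 i ≠ i).card
/-! ## Further constructions used in particular statements -/

/-- The map `Φ` on underlying finsets: a pointed block `(B, q)` of a pointed partition
above `α` is sent to the set of minima of the `α`-blocks contained in `B`, pointed at the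
minimum of the `α`-block containing `q`. -/
noncomputable def PhiMap (af : Finset (Finset ℕ × ℕ)) (pf : Finset (Finset ℕ × ℕ)) :
    Finset (Finset ℕ × ℕ) :=
  pf.image fun b =>
    ((af.filter fun c => c.1 ⊆ b.1).image fun c => minB c.1,
     ((af.filter fun c => b.2 ∈ c.1).image fun c => minB c.1).min.untopD 0)

/-- The expected word of labels of the unique increasing maximal chain of the interval
`[0̂, [n]^p]` of the pointed partition poset:
`(1,2)¹ ⋯ (1,n)¹` if `p = 1`, and `(1,p)⁰ (1,2)¹ ⋯ (1,p-1)¹ (1,p+1)¹ ⋯ (1,n)¹` otherwise. -/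
def expectedWordP (n p : ℕ) : List (ℕ × ℕ × Bool) :=
  let base := (List.range (n - 1)).map fun i => ((1 : ℕ), i + 2, true)
  if p = 1 then base else ((1 : ℕ), p, false) :: base.erase (1, p, true)

/-- Merge two words of labels, each with non-increasing first components, into a single
word with non-increasing first components. -/
def mergeByNu : List (ℕ × ℕ × Bool) → List (ℕ × ℕ × Bool) → List (ℕ × ℕ × Bool)
  | [], ys => ys
  | xs, [] => xs
  | x :: xs, y :: ys =>
      if y.1 ≤ x.1 then x :: mergeByNu xs (y :: ys) else y :: mergeByNu (x :: xs) ys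
termination_by xs ys => xs.length + ys.length

/-- The word of labels of a tree read along the reverse-minimal linear extension of its
internal vertices: the internal vertex `v` contributes `(ν (L v), ν (R v), color v)`, the
vertices being listed with non-increasing valencies (descendants first among equal
valencies). -/
def BT.rmword : BT → List (ℕ × ℕ × Bool)
  | BT.leaf _ => []
  | BT.node c l r => mergeByNu l.rmword r.rmword ++ [(l.nu, r.nu, c)]

/-- The word of labels of the saturated chain `c(F)` associated to a forest `F`, read along
the reverse-minimal linear extension of the internal vertices of `F`. -/
noncomputable def forestWord (F : Finset BT) : List (ℕ × ℕ × Bool) :=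
  (F.toList.map BT.rmword).foldr mergeByNu []

/-- `TLyn_{n,p}^•`: pointed Lyndon trees on `[n]` whose associated chain ends at `[n]^p`,
i.e. whose tracked pointed element is `p`. -/
abbrev TLynBullet (n p : ℕ) : Type :=
  {T : BT // T.normalized ∧ T.pLyn ∧ T.leaves = Finset.Icc 1 n ∧ T.ppt = p}

/-- The labeling `λ̃` of `Πₙ•` proposed by Bellier-Millès, Delcroix-Oger and Hoffbeck:
the cover `u`-merging blocks with minima `a < b` in a pointed partition `π` with `|π|`
blocks is labeled `(b, a + n - |π|)` if `u = 0` and `(b, b + n - |π|)` if `u = 1`. -/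
noncomputable def labT (n : ℕ) {A : Finset ℕ} (π π' : PPart A) : ℕ × ℕ :=
  let olds := π.1 \ π'.1
  let mins := olds.image fun b => minB b.1
  let a := mins.min.untopD 0
  let b := mins.max.unbotD 0
  if ∃ c ∈ olds, minB c.1 = a ∧ ∃ d ∈ π'.1 \ π.1, d.2 = c.2
  then (b, b + n - π.1.card)
  else (b, a + n - π.1.card)

/-- The (strict) lexicographic order on `ℕ × ℕ`. -/
def ltT (x y : ℕ × ℕ) : Prop := x.1 < y.1 ∨ (x.1 = y.1 ∧ x.2 < y.2)


/-! ### Auxiliary development for Statement 17 -/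

section SFUniformAux

open Finset Function

/-- If `G` stabilizes everywhere and `G'` pointwise either already stabilizes or agrees
with `G`, then `G'` stabilizes everywhere. -/
lemma SFaux_stab (G G' : ℕ → ℕ) (hG : ∀ x, ∃ k, G^[k+1] x = G^[k] x)
    (h : ∀ x, (∃ k, G'^[k+1] x = G'^[k] x) ∨ G' x = G x) (x : ℕ) :
    ∃ k, G'^[k+1] x = G'^[k] x := by
  suffices H : ∀ N x, Nat.find (hG x) ≤ N → ∃ k, G'^[k+1] x = G'^[k] x from H _ x le_rfl
  intro N
  induction N with
  | zero =>
    intro x hx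
    have h0 : G x = x := by
      have hs := Nat.find_spec (hG x)
      rw [Nat.le_zero.mp hx] at hs
      simpa using hs
    rcases h x with h' | h'
    · exact h'
    · exact ⟨0, by simp [h', h0]⟩
  | succ N ih =>
    intro x hx
    rcases h x with h' | h'
    · exact h'
    by_cases h0 : G x = x
    · exact ⟨0, by simp [h', h0]⟩
    have hne : Nat.find (hG x) ≠ 0 := by
      intro hz
      have hs := Nat.find_spec (hG x)
      rw [hz] at hs
      simp at hs
      exact h0 hs
    obtain ⟨K, hK⟩ := Nat.exists_eq_succ_of_ne_zero hne
    have hspec := Nat.find_spec (hG x)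
    rw [hK] at hspec
    have hfind : Nat.find (hG (G x)) ≤ K := by
      apply Nat.find_le
      rw [← Function.iterate_succ_apply, ← Function.iterate_succ_apply]
      exact hspec
    have hKN : K ≤ N := by
      rw [hK] at hx
      omega
    obtain ⟨k, hk⟩ := ih (G x) (hfind.trans hKN)
    refine ⟨k + 1, ?_⟩
    calc G'^[k+1+1] x = G'^[k+1] (G' x) := Function.iterate_succ_apply G' (k+1) x
      _ = G'^[k+1] (G x) := by rw [h']
      _ = G'^[k] (G x) := hk
      _ = G'^[k] (G' x) := by rw [h']
      _ = G'^[k+1] x := (Function.iterate_succ_apply G' k x).symm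

/-- `G` extends `F`: they agree off the roots of `F`, and `G` maps roots of `F` to
roots of `F`. -/
def ExtSF (F G : ℕ → ℕ) : Prop :=
  (∀ x, F x ≠ x → G x = F x) ∧ (∀ x, F x = x → F (G x) = G x)

lemma ExtSF.refl (F : ℕ → ℕ) : ExtSF F F :=
  ⟨fun _ _ => rfl, fun x h => by rw [h]; exact h⟩

lemma ExtSF.update {F H : ℕ → ℕ} (hFH : ExtSF F H) (a b : ℕ)
    (ha : H a = a) (hb : H b = b) : ExtSF F (Function.update H a b) := by
  constructor
  · intro x hx
    have hHx : H x = F x := hFH.1 x hx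
    have hxa : x ≠ a := by rintro rfl; exact hx (by rw [← hHx, ha])
    rw [Function.update_of_ne hxa, hHx]
  · intro x hFx
    by_cases hxa : x = a
    · subst hxa
      have hFb : F b = b := by
        by_contra hne
        exact hne ((hFH.1 b hne).symm.trans hb)
      simp [Function.update_self, hFb]
    · rw [Function.update_of_ne hxa]
      exact hFH.2 x hFx

lemma ext_of_leOf {n : ℕ} (F G : SF n) (h : leOf covSF F G) : ExtSF F.1 G.1 := by
  have h' : Relation.ReflTransGen covSF F G := h
  clear h
  induction h' with
  | refl => exact ExtSF.refl F.1
  | tail _ hbc ih =>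
    obtain ⟨r1, _, r2, _, _, h1, h2, hc | hc⟩ := hbc
    · rw [hc]; exact ExtSF.update ih r1 r2 h1 h2
    · rw [hc]; exact ExtSF.update ih r2 r1 h2 h1

lemma leOf_of_ext {n : ℕ} (F G : SF n) (h : ExtSF F.1 G.1) : leOf covSF F G := by
  suffices H : ∀ (N : ℕ) (G : SF n), ExtSF F.1 G.1 →
      ((Finset.Icc 1 n).filter fun x => F.1 x = x ∧ G.1 x ≠ x).card ≤ N →
      leOf covSF F G from H _ G h le_rfl
  intro N
  induction N with
  | zero =>
    intro G hG hcard
    have hFG : G = F := by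
      apply Subtype.ext; funext x
      by_cases hx : x ∈ Finset.Icc 1 n
      · by_cases hFx : F.1 x = x
        · have hGx : G.1 x = x := by
            by_contra hne
            have hmem : x ∈ (Finset.Icc 1 n).filter fun x => F.1 x = x ∧ G.1 x ≠ x :=
              Finset.mem_filter.mpr ⟨hx, hFx, hne⟩
            have := Finset.card_pos.mpr ⟨x, hmem⟩
            omega
          rw [hGx, hFx]
        · exact hG.1 x hFx
      · rw [G.2.2.1 x hx, F.2.2.1 x hx]
    rw [hFG]
    exact Relation.ReflTransGen.refl
  | succ N ih =>
    intro G hG hcard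
    by_cases hD : ((Finset.Icc 1 n).filter fun x => F.1 x = x ∧ G.1 x ≠ x).Nonempty
    case neg =>
      refine ih G hG ?_
      rw [Finset.not_nonempty_iff_eq_empty.mp hD]
      simp
    obtain ⟨x₀, hx₀⟩ := hD
    rw [Finset.mem_filter] at hx₀
    obtain ⟨hx₀I, hFx₀, hGx₀⟩ := hx₀
    have hiter : ∀ j, G.1^[j] x₀ ∈ Finset.Icc 1 n ∧ F.1 (G.1^[j] x₀) = G.1^[j] x₀ := by
      intro j
      induction j with
      | zero => exact ⟨hx₀I, hFx₀⟩
      | succ j ihj =>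
        rw [Function.iterate_succ_apply']
        exact ⟨G.2.1 _ ihj.1, hG.2 _ ihj.2⟩
    have hstab := G.2.2.2 x₀
    have hspec : G.1^[Nat.find hstab + 1] x₀ = G.1^[Nat.find hstab] x₀ := Nat.find_spec hstab
    have hk0pos : Nat.find hstab ≠ 0 := by
      intro hz
      rw [hz] at hspec
      simp at hspec
      exact hGx₀ hspec
    obtain ⟨K, hK⟩ := Nat.exists_eq_succ_of_ne_zero hk0pos
    set r1 := G.1^[K] x₀ with hr1def
    set r2 := G.1 r1 with hr2def
    have hr2 : r2 = G.1^[Nat.find hstab] x₀ := by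
      rw [hr2def, hr1def, ← Function.iterate_succ_apply' G.1 K x₀, hK]
    have hGr2 : G.1 r2 = r2 := by
      rw [hr2, ← Function.iterate_succ_apply' G.1 (Nat.find hstab) x₀]
      exact hspec
    have hner : r1 ≠ r2 := by
      intro he
      have hmin := Nat.find_min hstab (show K < Nat.find hstab by omega)
      apply hmin
      rw [Function.iterate_succ_apply' G.1 K x₀, ← hr1def, ← hr2def]
      exact he.symm
    have hr1mem : r1 ∈ Finset.Icc 1 n := (hiter K).1
    have hFr1 : F.1 r1 = r1 := (hiter K).2
    have hr2mem : r2 ∈ Finset.Icc 1 n := by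
      rw [hr2]; exact (hiter (Nat.find hstab)).1
    have hFr2 : F.1 r2 = r2 := by rw [hr2]; exact (hiter (Nat.find hstab)).2
    have hG'valid : SFvalid n (Function.update G.1 r1 r1) := by
      refine ⟨?_, ?_, ?_⟩
      · intro x hx
        by_cases hxr : x = r1
        · subst hxr; rw [Function.update_self]; exact hr1mem
        · rw [Function.update_of_ne hxr]; exact G.2.1 x hx
      · intro x hx
        have hxr : x ≠ r1 := fun he => hx (he ▸ hr1mem)
        rw [Function.update_of_ne hxr]; exact G.2.2.1 x hx
      · refine SFaux_stab G.1 _ G.2.2.2 ?_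
        intro x
        by_cases hxr : x = r1
        · subst hxr
          exact Or.inl ⟨0, by simp⟩
        · exact Or.inr (Function.update_of_ne hxr _ _)
    set G' : SF n := ⟨Function.update G.1 r1 r1, hG'valid⟩ with hG'def
    have hExtG' : ExtSF F.1 G'.1 := by
      constructor
      · intro x hx
        have hxr : x ≠ r1 := by rintro rfl; exact hx hFr1
        show Function.update G.1 r1 r1 x = F.1 x
        rw [Function.update_of_ne hxr]; exact hG.1 x hx
      · intro x hFx
        by_cases hxr : x = r1
        · rw [hxr]
          show F.1 (Function.update G.1 r1 r1 r1) = Function.update G.1 r1 r1 r1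
          rw [Function.update_self]; exact hFr1
        · show F.1 (Function.update G.1 r1 r1 x) = Function.update G.1 r1 r1 x
          rw [Function.update_of_ne hxr]; exact hG.2 x hFx
    have hr1D : r1 ∈ (Finset.Icc 1 n).filter fun x => F.1 x = x ∧ G.1 x ≠ x := by
      refine Finset.mem_filter.mpr ⟨hr1mem, hFr1, ?_⟩
      intro he
      exact hner (hr2def.trans he).symm
    have hsub : ((Finset.Icc 1 n).filter fun x => F.1 x = x ∧ G'.1 x ≠ x) ⊆
        ((Finset.Icc 1 n).filter fun x => F.1 x = x ∧ G.1 x ≠ x).erase r1 := by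
      intro x hx
      rw [Finset.mem_filter] at hx
      have hxr : x ≠ r1 := by
        rintro rfl
        exact hx.2.2 (Function.update_self _ _ _)
      refine Finset.mem_erase.mpr ⟨hxr, Finset.mem_filter.mpr ⟨hx.1, hx.2.1, ?_⟩⟩
      have := hx.2.2
      rwa [show G'.1 x = G.1 x from Function.update_of_ne hxr _ _] at this
    have hcard' : ((Finset.Icc 1 n).filter fun x => F.1 x = x ∧ G'.1 x ≠ x).card ≤ N := by
      have h1 := Finset.card_le_card hsub
      rw [Finset.card_erase_of_mem hr1D] at h1
      have h2 := Finset.card_pos.mpr ⟨r1, hr1D⟩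
      omega
    have hle := ih G' hExtG' hcard'
    refine Relation.ReflTransGen.tail hle ?_
    refine ⟨r1, hr1mem, r2, hr2mem, hner, Function.update_self _ _ _,
      ?_, Or.inl ?_⟩
    · show Function.update G.1 r1 r1 r2 = r2
      rw [Function.update_of_ne (Ne.symm hner)]; exact hGr2
    · funext x
      by_cases hxr : x = r1
      · subst hxr
        rw [Function.update_self]
      · rw [Function.update_of_ne hxr]
        show G.1 x = Function.update G.1 r1 r1 x
        rw [Function.update_of_ne hxr]

/-- Relabeling data between the roots of `F` inside `[1, n]` and `[1, m]`. -/
structure SFSetup (n m : ℕ) (F : ℕ → ℕ) (R : Finset ℕ) (σ τ : ℕ → ℕ) : Prop where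
  hFv : SFvalid n F
  hR : ∀ x, x ∈ R ↔ x ∈ Finset.Icc 1 n ∧ F x = x
  hσm : ∀ x ∈ R, σ x ∈ Finset.Icc 1 m
  hτm : ∀ j ∈ Finset.Icc 1 m, τ j ∈ R
  hτσ : ∀ x ∈ R, τ (σ x) = x
  hστ : ∀ j ∈ Finset.Icc 1 m, σ (τ j) = j

lemma SFaux_exists_st (R : Finset ℕ) (m : ℕ) (hc : R.card = m) :
    ∃ σ τ : ℕ → ℕ, (∀ x ∈ R, σ x ∈ Finset.Icc 1 m) ∧ (∀ j ∈ Finset.Icc 1 m, τ j ∈ R) ∧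
      (∀ x ∈ R, τ (σ x) = x) ∧ (∀ j ∈ Finset.Icc 1 m, σ (τ j) = j) := by
  classical
  let iso := R.orderIsoOfFin hc
  refine ⟨fun x => if hx : x ∈ R then ((iso.symm ⟨x, hx⟩ : Fin m) : ℕ) + 1 else 0,
          fun j => if hj : j - 1 < m then ((iso ⟨j - 1, hj⟩ : R) : ℕ) else 0, ?_, ?_, ?_, ?_⟩
  · intro x hx
    simp only [dif_pos hx]
    have := (iso.symm ⟨x, hx⟩).isLt
    rw [Finset.mem_Icc]
    omega
  · intro j hj
    rw [Finset.mem_Icc] at hj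
    have hlt : j - 1 < m := by omega
    simp only [dif_pos hlt]
    exact (iso ⟨j - 1, hlt⟩).2
  · intro x hx
    simp only [dif_pos hx]
    have hv : ((iso.symm ⟨x, hx⟩ : Fin m) : ℕ) + 1 - 1 < m := by
      have := (iso.symm ⟨x, hx⟩).isLt; omega
    simp only [dif_pos hv]
    have heq : (⟨((iso.symm ⟨x, hx⟩ : Fin m) : ℕ) + 1 - 1, hv⟩ : Fin m) = iso.symm ⟨x, hx⟩ := by
      apply Fin.ext; simp
    rw [heq, OrderIso.apply_symm_apply]
  · intro j hj
    rw [Finset.mem_Icc] at hj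
    have hlt : j - 1 < m := by omega
    simp only [dif_pos hlt]
    have hmem : ((iso ⟨j - 1, hlt⟩ : R) : ℕ) ∈ R := (iso ⟨j - 1, hlt⟩).2
    simp only [dif_pos hmem]
    have heq : (⟨((iso ⟨j - 1, hlt⟩ : R) : ℕ), hmem⟩ : {x // x ∈ R}) = iso ⟨j - 1, hlt⟩ :=
      Subtype.ext rfl
    rw [heq, OrderIso.symm_apply_apply]
    show j - 1 + 1 = j
    omega

variable {n m : ℕ} {F : ℕ → ℕ} {R : Finset ℕ} {σ τ : ℕ → ℕ}

/-- The contraction of a forest above `F` to a forest on `[1, m]`. -/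
noncomputable def phiF (m : ℕ) (σ τ : ℕ → ℕ) (G : ℕ → ℕ) : ℕ → ℕ :=
  fun j => if j ∈ Finset.Icc 1 m then σ (G (τ j)) else j

/-- The extension of a forest on `[1, m]` to a forest above `F`. -/
noncomputable def psiF (F : ℕ → ℕ) (R : Finset ℕ) (σ τ : ℕ → ℕ) (g : ℕ → ℕ) : ℕ → ℕ :=
  fun x => if x ∈ R then τ (g (σ x)) else F x

lemma SFSetup.inv (S : SFSetup n m F R σ τ) {G : ℕ → ℕ} (hG : ExtSF F G)
    (hGv : SFvalid n G) : ∀ x ∈ R, G x ∈ R := by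
  intro x hx
  have h := (S.hR x).mp hx
  exact (S.hR _).mpr ⟨hGv.1 x h.1, hG.2 x h.2⟩

lemma SFaux_phi_iter (S : SFSetup n m F R σ τ) {G : ℕ → ℕ} (hG : ExtSF F G)
    (hGv : SFvalid n G) :
    ∀ (k j : ℕ), j ∈ Finset.Icc 1 m → (phiF m σ τ G)^[k] j = σ (G^[k] (τ j)) := by
  intro k
  induction k with
  | zero =>
    intro j hj
    exact (S.hστ j hj).symm
  | succ k ihk =>
    intro j hj
    have hτj : τ j ∈ R := S.hτm j hj
    have hGτj : G (τ j) ∈ R := S.inv hG hGv _ hτj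
    have h1 : phiF m σ τ G j = σ (G (τ j)) := if_pos hj
    rw [Function.iterate_succ_apply, h1, ihk _ (S.hσm _ hGτj), S.hτσ _ hGτj,
      ← Function.iterate_succ_apply]

lemma SFaux_phi_valid (S : SFSetup n m F R σ τ) {G : ℕ → ℕ} (hG : ExtSF F G)
    (hGv : SFvalid n G) : SFvalid m (phiF m σ τ G) := by
  refine ⟨?_, ?_, ?_⟩
  · intro j hj
    have h1 : phiF m σ τ G j = σ (G (τ j)) := if_pos hj
    rw [h1]
    exact S.hσm _ (S.inv hG hGv _ (S.hτm j hj))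
  · intro j hj
    exact if_neg hj
  · intro j
    by_cases hj : j ∈ Finset.Icc 1 m
    · obtain ⟨k, hk⟩ := hGv.2.2 (τ j)
      exact ⟨k, by rw [SFaux_phi_iter S hG hGv _ _ hj, SFaux_phi_iter S hG hGv _ _ hj, hk]⟩
    · exact ⟨0, by show phiF m σ τ G j = j; exact if_neg hj⟩

lemma SFaux_psi_iter (S : SFSetup n m F R σ τ) {g : ℕ → ℕ} (hg : SFvalid m g) :
    ∀ (k x : ℕ), x ∈ R → (psiF F R σ τ g)^[k] x = τ (g^[k] (σ x)) := by
  intro k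
  induction k with
  | zero =>
    intro x hx
    exact (S.hτσ x hx).symm
  | succ k ihk =>
    intro x hx
    have hσx : σ x ∈ Finset.Icc 1 m := S.hσm x hx
    have hgσx : g (σ x) ∈ Finset.Icc 1 m := hg.1 _ hσx
    have h1 : psiF F R σ τ g x = τ (g (σ x)) := if_pos hx
    rw [Function.iterate_succ_apply, h1, ihk _ (S.hτm _ hgσx), S.hστ _ hgσx,
      ← Function.iterate_succ_apply]

lemma SFaux_psi_valid (S : SFSetup n m F R σ τ) {g : ℕ → ℕ} (hg : SFvalid m g) :
    SFvalid n (psiF F R σ τ g) := by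
  refine ⟨?_, ?_, ?_⟩
  · intro x hx
    by_cases hxR : x ∈ R
    · have h1 : psiF F R σ τ g x = τ (g (σ x)) := if_pos hxR
      rw [h1]
      have := S.hτm _ (hg.1 _ (S.hσm x hxR))
      exact ((S.hR _).mp this).1
    · have h1 : psiF F R σ τ g x = F x := if_neg hxR
      rw [h1]
      exact S.hFv.1 x hx
  · intro x hx
    have hxR : x ∉ R := fun hc => hx ((S.hR x).mp hc).1
    have h1 : psiF F R σ τ g x = F x := if_neg hxR
    rw [h1]
    exact S.hFv.2.1 x hx
  · refine SFaux_stab F _ S.hFv.2.2 ?_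
    intro x
    by_cases hxR : x ∈ R
    · refine Or.inl ?_
      obtain ⟨k, hk⟩ := hg.2.2 (σ x)
      exact ⟨k, by rw [SFaux_psi_iter S hg _ _ hxR, SFaux_psi_iter S hg _ _ hxR, hk]⟩
    · exact Or.inr (if_neg hxR)

lemma SFaux_psi_ext (S : SFSetup n m F R σ τ) {g : ℕ → ℕ} (hg : SFvalid m g) :
    ExtSF F (psiF F R σ τ g) := by
  constructor
  · intro x hx
    have hxR : x ∉ R := fun hc => hx ((S.hR x).mp hc).2
    exact if_neg hxR
  · intro x hFx
    by_cases hxR : x ∈ R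
    · have h1 : psiF F R σ τ g x = τ (g (σ x)) := if_pos hxR
      rw [h1]
      exact ((S.hR _).mp (S.hτm _ (hg.1 _ (S.hσm x hxR)))).2
    · have hxI : x ∉ Finset.Icc 1 n := fun hc => hxR ((S.hR x).mpr ⟨hc, hFx⟩)
      have h1 : psiF F R σ τ g x = F x := if_neg hxR
      rw [h1, hFx]
      exact hFx

lemma SFaux_psi_phi (S : SFSetup n m F R σ τ) {G : ℕ → ℕ} (hG : ExtSF F G)
    (hGv : SFvalid n G) : psiF F R σ τ (phiF m σ τ G) = G := by
  funext x
  by_cases hxR : x ∈ R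
  · have h1 : psiF F R σ τ (phiF m σ τ G) x = τ (phiF m σ τ G (σ x)) := if_pos hxR
    have h2 : phiF m σ τ G (σ x) = σ (G (τ (σ x))) := if_pos (S.hσm x hxR)
    rw [h1, h2, S.hτσ x hxR, S.hτσ _ (S.inv hG hGv x hxR)]
  · have h1 : psiF F R σ τ (phiF m σ τ G) x = F x := if_neg hxR
    rw [h1]
    by_cases hFx : F x = x
    · have hxI : x ∉ Finset.Icc 1 n := fun hc => hxR ((S.hR x).mpr ⟨hc, hFx⟩)
      rw [hFx, hGv.2.1 x hxI]
    · exact (hG.1 x hFx).symm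

lemma SFaux_phi_psi (S : SFSetup n m F R σ τ) {g : ℕ → ℕ} (hg : SFvalid m g) :
    phiF m σ τ (psiF F R σ τ g) = g := by
  funext j
  by_cases hj : j ∈ Finset.Icc 1 m
  · have hτj : τ j ∈ R := S.hτm j hj
    have h1 : phiF m σ τ (psiF F R σ τ g) j = σ (psiF F R σ τ g (τ j)) := if_pos hj
    have h2 : psiF F R σ τ g (τ j) = τ (g (σ (τ j))) := if_pos hτj
    rw [h1, h2, S.hστ j hj, S.hστ _ (hg.1 j hj)]
  · have h1 : phiF m σ τ (psiF F R σ τ g) j = j := if_neg hj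
    rw [h1, hg.2.1 j hj]

lemma SFaux_phi_update (S : SFSetup n m F R σ τ) {a b : ℕ} (ha : a ∈ R) (hb : b ∈ R)
    (G : ℕ → ℕ) :
    phiF m σ τ (Function.update G a b) = Function.update (phiF m σ τ G) (σ a) (σ b) := by
  funext j
  by_cases hj : j ∈ Finset.Icc 1 m
  · by_cases hja : j = σ a
    · subst hja
      have h1 : phiF m σ τ (Function.update G a b) (σ a) =
          σ (Function.update G a b (τ (σ a))) := if_pos hj
      rw [h1, S.hτσ a ha, Function.update_self, Function.update_self]
    · have hτja : τ j ≠ a := by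
        intro he
        exact hja (by rw [← S.hστ j hj, he])
      have h1 : phiF m σ τ (Function.update G a b) j =
          σ (Function.update G a b (τ j)) := if_pos hj
      rw [h1, Function.update_of_ne hτja, Function.update_of_ne hja]
      exact (if_pos hj).symm
  · have hja : j ≠ σ a := by
      intro he
      exact hj (he ▸ S.hσm a ha)
    have h1 : phiF m σ τ (Function.update G a b) j = j := if_neg hj
    rw [h1, Function.update_of_ne hja]
    exact (if_neg hj).symm

lemma SFaux_psi_update (S : SFSetup n m F R σ τ) {s1 s2 : ℕ}
    (hs1 : s1 ∈ Finset.Icc 1 m) (hs2 : s2 ∈ Finset.Icc 1 m) (g : ℕ → ℕ) :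
    psiF F R σ τ (Function.update g s1 s2) =
      Function.update (psiF F R σ τ g) (τ s1) (τ s2) := by
  funext x
  by_cases hxR : x ∈ R
  · by_cases hx1 : x = τ s1
    · subst hx1
      have h1 : psiF F R σ τ (Function.update g s1 s2) (τ s1) =
          τ (Function.update g s1 s2 (σ (τ s1))) := if_pos hxR
      rw [h1, S.hστ s1 hs1, Function.update_self, Function.update_self]
    · have hσx1 : σ x ≠ s1 := by
        intro he
        exact hx1 (by rw [← S.hτσ x hxR, he])
      have h1 : psiF F R σ τ (Function.update g s1 s2) x =
          τ (Function.update g s1 s2 (σ x)) := if_pos hxR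
      rw [h1, Function.update_of_ne hσx1, Function.update_of_ne hx1]
      exact (if_pos hxR).symm
  · have hx1 : x ≠ τ s1 := by
      intro he
      exact hxR (he ▸ S.hτm s1 hs1)
    have h1 : psiF F R σ τ (Function.update g s1 s2) x = F x := if_neg hxR
    rw [h1, Function.update_of_ne hx1]
    exact (if_neg hxR).symm

lemma SFaux_cov_phi (S : SFSetup n m F R σ τ) {G G' : SF n}
    (hG : ExtSF F G.1) (hcov : covSF G G') (Gm G'm : SF m)
    (hGm : Gm.1 = phiF m σ τ G.1) (hG'm : G'm.1 = phiF m σ τ G'.1) :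
    covSF Gm G'm := by
  obtain ⟨r1, h1m, r2, h2m, hne, hc1, hc2, hdisj⟩ := hcov
  have hFr1 : F r1 = r1 := by
    by_contra hne1
    exact hne1 ((hG.1 r1 hne1).symm.trans hc1)
  have hFr2 : F r2 = r2 := by
    by_contra hne2
    exact hne2 ((hG.1 r2 hne2).symm.trans hc2)
  have hr1R : r1 ∈ R := (S.hR r1).mpr ⟨h1m, hFr1⟩
  have hr2R : r2 ∈ R := (S.hR r2).mpr ⟨h2m, hFr2⟩
  refine ⟨σ r1, S.hσm r1 hr1R, σ r2, S.hσm r2 hr2R, ?_, ?_, ?_, ?_⟩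
  · intro he
    exact hne (by rw [← S.hτσ r1 hr1R, he, S.hτσ r2 hr2R])
  · rw [hGm]
    have h1 : phiF m σ τ G.1 (σ r1) = σ (G.1 (τ (σ r1))) := if_pos (S.hσm r1 hr1R)
    rw [h1, S.hτσ r1 hr1R, hc1]
  · rw [hGm]
    have h2 : phiF m σ τ G.1 (σ r2) = σ (G.1 (τ (σ r2))) := if_pos (S.hσm r2 hr2R)
    rw [h2, S.hτσ r2 hr2R, hc2]
  · rcases hdisj with hd | hd
    · exact Or.inl (by rw [hG'm, hGm, hd, SFaux_phi_update S hr1R hr2R])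
    · exact Or.inr (by rw [hG'm, hGm, hd, SFaux_phi_update S hr2R hr1R])

lemma SFaux_cov_psi (S : SFSetup n m F R σ τ) {g g' : SF m} (hcov : covSF g g')
    (Gn G'n : SF n) (hGn : Gn.1 = psiF F R σ τ g.1) (hG'n : G'n.1 = psiF F R σ τ g'.1) :
    covSF Gn G'n := by
  obtain ⟨s1, h1m, s2, h2m, hne, hc1, hc2, hdisj⟩ := hcov
  have hτ1R : τ s1 ∈ R := S.hτm s1 h1m
  have hτ2R : τ s2 ∈ R := S.hτm s2 h2m
  refine ⟨τ s1, ((S.hR _).mp hτ1R).1, τ s2, ((S.hR _).mp hτ2R).1, ?_, ?_, ?_, ?_⟩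
  · intro he
    exact hne (by rw [← S.hστ s1 h1m, he, S.hστ s2 h2m])
  · rw [hGn]
    have h1 : psiF F R σ τ g.1 (τ s1) = τ (g.1 (σ (τ s1))) := if_pos hτ1R
    rw [h1, S.hστ s1 h1m, hc1]
  · rw [hGn]
    have h2 : psiF F R σ τ g.1 (τ s2) = τ (g.1 (σ (τ s2))) := if_pos hτ2R
    rw [h2, S.hστ s2 h2m, hc2]
  · rcases hdisj with hd | hd
    · exact Or.inl (by rw [hG'n, hGn, hd, SFaux_psi_update S h1m h2m])
    · exact Or.inr (by rw [hG'n, hGn, hd, SFaux_psi_update S h2m h1m])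

lemma SFaux_leOf_phi (S : SFSetup n m F R σ τ) (G H : SF n) (hG : ExtSF F G.1)
    (hGH : leOf covSF G H) :
    ∀ (Gm Hm : SF m), Gm.1 = phiF m σ τ G.1 → Hm.1 = phiF m σ τ H.1 →
      leOf covSF Gm Hm := by
  have hGH' : Relation.ReflTransGen covSF G H := hGH
  clear hGH
  induction hGH' with
  | refl =>
    intro Gm Hm h1 h2
    have he : Gm = Hm := Subtype.ext (h1.trans h2.symm)
    rw [he]
    exact Relation.ReflTransGen.refl
  | @tail b c hab hbc ih =>
    intro Gm Hm h1 h2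
    have hFb : ExtSF F b.1 :=
      ext_of_leOf ⟨F, S.hFv⟩ b
        (Relation.ReflTransGen.trans (leOf_of_ext ⟨F, S.hFv⟩ G hG) hab)
    have hBm : SFvalid m (phiF m σ τ b.1) := SFaux_phi_valid S hFb b.2
    have h3 := ih Gm ⟨phiF m σ τ b.1, hBm⟩ h1 rfl
    have h4 : covSF (⟨phiF m σ τ b.1, hBm⟩ : SF m) Hm :=
      SFaux_cov_phi S hFb hbc _ Hm rfl h2
    exact Relation.ReflTransGen.tail h3 h4

lemma SFaux_leOf_psi (S : SFSetup n m F R σ τ) (g h : SF m) (hgh : leOf covSF g h) :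
    ∀ (Gn Hn : SF n), Gn.1 = psiF F R σ τ g.1 → Hn.1 = psiF F R σ τ h.1 →
      leOf covSF Gn Hn := by
  have hgh' : Relation.ReflTransGen covSF g h := hgh
  clear hgh
  induction hgh' with
  | refl =>
    intro Gn Hn h1 h2
    have he : Gn = Hn := Subtype.ext (h1.trans h2.symm)
    rw [he]
    exact Relation.ReflTransGen.refl
  | @tail b c hab hbc ih =>
    intro Gn Hn h1 h2
    have hBn : SFvalid n (psiF F R σ τ b.1) := SFaux_psi_valid S b.2
    have h3 := ih Gn ⟨psiF F R σ τ b.1, hBn⟩ h1 rfl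
    have h4 : covSF (⟨psiF F R σ τ b.1, hBn⟩ : SF n) Hn :=
      SFaux_cov_psi S hbc _ Hn rfl h2
    exact Relation.ReflTransGen.tail h3 h4

end SFUniformAux

/-- Reiner's poset of rooted spanning forests `SFₙ` is uniform: the
principal upper filter of an element of rank `i` (a forest with `i` edges, hence `n - i`
rooted trees) is isomorphic as a poset to `SF_{n-i}`. -/
theorem SF_uniform (n : ℕ) (F : SF n) (i : ℕ) (h : rkSF F = i) :
    ∃ e : {G : SF n // leOf covSF F G} ≃ SF (n - i),
      ∀ G G', leOf covSF G.1 G'.1 ↔ leOf covSF (e G) (e G') := by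
  classical
  have hcard : ((Finset.Icc 1 n).filter fun x => F.1 x = x).card = n - i := by
    have h1 := Finset.card_filter_add_card_filter_not
      (s := Finset.Icc 1 n) (p := fun x => F.1 x = x)
    have h2 : ((Finset.Icc 1 n).filter fun x => ¬ F.1 x = x).card = i := h
    have h3 : (Finset.Icc 1 n).card = n := by
      rw [Nat.card_Icc]
      omega
    omega
  obtain ⟨σ, τ, hσm, hτm, hτσ, hστ⟩ :=
    SFaux_exists_st ((Finset.Icc 1 n).filter fun x => F.1 x = x) (n - i) hcard
  have S : SFSetup n (n - i) F.1 ((Finset.Icc 1 n).filter fun x => F.1 x = x) σ τ :=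
    ⟨F.2, fun x => Finset.mem_filter, hσm, hτm, hτσ, hστ⟩
  refine ⟨⟨fun G => ⟨phiF (n - i) σ τ G.1.1,
              SFaux_phi_valid S (ext_of_leOf F G.1 G.2) G.1.2⟩,
           fun g => ⟨⟨psiF F.1 ((Finset.Icc 1 n).filter fun x => F.1 x = x) σ τ g.1,
              SFaux_psi_valid S g.2⟩, leOf_of_ext F _ (SFaux_psi_ext S g.2)⟩,
           ?_, ?_⟩, ?_⟩
  · intro G
    apply Subtype.ext
    apply Subtype.ext
    exact SFaux_psi_phi S (ext_of_leOf F G.1 G.2) G.1.2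
  · intro g
    apply Subtype.ext
    exact SFaux_phi_psi S g.2
  · intro G G'
    simp only [Equiv.coe_fn_mk]
    constructor
    · intro hle
      exact SFaux_leOf_phi S G.1 G'.1 (ext_of_leOf F G.1 G.2) hle _ _ rfl rfl
    · intro hle
      exact SFaux_leOf_psi S _ _ hle G.1 G'.1
        (SFaux_psi_phi S (ext_of_leOf F G.1 G.2) G.1.2).symm
        (SFaux_psi_phi S (ext_of_leOf F G'.1 G'.2) G'.1.2).symm
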